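/- For complex numbers a, b, q with |q| < 1 and bq^n ≠ 1 for all n ≥ 1, we have Σ_{j≥0} (-b/a;q)_j a^j q^{j(j+1)/2} / ((q;q)_j (bq;q)_j) = (-aq;q)_∞ / (bq;q)_∞, where a^j (-b/a;q)_j is interpreted as the polynomial ∏_{k=0}^{j-1}(a + b q^k). -/

import Mathlib

open Finset

/-- Gaussian binomial coefficient as a polynomial in `q`, via the q-Pascal rule. -/
noncomputable def qB (q : ℂ) : ℕ → ℕ → ℂ
  | 0, 0 => 1
  | 0, _+1 => 0
  | _+1, 0 => 1
  | n+1, j+1 => qB q n (j+1) + q ^ (n - j) * qB q n j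

lemma qB_zero (q : ℂ) : ∀ n, qB q n 0 = 1 := by
  intro n; cases n <;> rfl

lemma qB_succ (q : ℂ) (n j : ℕ) :
    qB q (n+1) (j+1) = qB q n (j+1) + q ^ (n - j) * qB q n j := rfl

lemma qB_eq_zero (q : ℂ) : ∀ n j, n < j → qB q n j = 0 := by
  intro n
  induction n with
  | zero => intro j hj; match j, hj with | j+1, _ => rfl
  | succ n ih =>
    intro j hj
    match j, hj with
    | j+1, hj =>
      rw [qB_succ, ih (j+1) (by omega), ih j (by omega)]; ring

lemma qB_diag (q : ℂ) : ∀ n, qB q n n = 1 := by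
  intro n
  induction n with
  | zero => rfl
  | succ n ih =>
    rw [qB_succ, qB_eq_zero q n (n+1) (by omega), ih]; simp

/-- The key finite identity (★). -/
lemma qB_star (q a : ℂ) : ∀ n, ∀ b : ℂ,
    ∑ j ∈ range (n+1), qB q n j * q ^ (j * (j + 1) / 2) *
      (∏ k ∈ range j, (a + b * q ^ k)) * (∏ k ∈ Ico j n, (1 - b * q ^ (k + 1)))
    = ∏ k ∈ range n, (1 + a * q ^ (k + 1)) := by
  intro n
  induction n with
  | zero => intro b; simp [qB]
  | succ n ih =>
    intro b
    have key : ∀ j ∈ range (n+1),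
        q ^ (n - j) * qB q n j * q ^ ((j+1) * ((j+1) + 1) / 2) *
          (∏ k ∈ range (j+1), (a + b * q ^ k)) * (∏ k ∈ Ico (j+1) (n+1), (1 - b * q ^ (k + 1)))
        = q ^ (n+1) * (a + b) * (qB q n j * q ^ (j * (j + 1) / 2) *
          (∏ k ∈ range j, (a + (b * q) * q ^ k)) *
          (∏ k ∈ Ico j n, (1 - (b * q) * q ^ (k + 1)))) := by
      intro j hj
      have hjn : j ≤ n := Nat.lt_succ_iff.mp (mem_range.mp hj)
      have hpow : q ^ (n - j) * q ^ ((j+1) * ((j+1) + 1) / 2)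
          = q ^ (n+1) * q ^ (j * (j + 1) / 2) := by
        rw [← pow_add, ← pow_add]; congr 1
        have e1 : (j+1) * ((j+1) + 1) = j * (j + 1) + 2 * (j + 1) := by ring
        omega
      have hP : (∏ k ∈ range (j+1), (a + b * q ^ k))
          = (a + b) * ∏ k ∈ range j, (a + (b * q) * q ^ k) := by
        rw [prod_range_succ']
        simp only [pow_zero, mul_one]
        rw [mul_comm]
        congr 1
        refine prod_congr rfl fun k _ => ?_
        ring
      have hR : (∏ k ∈ Ico (j+1) (n+1), (1 - b * q ^ (k + 1)))
          = ∏ k ∈ Ico j n, (1 - (b * q) * q ^ (k + 1)) := by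
        rw [prod_Ico_eq_prod_range, prod_Ico_eq_prod_range]
        simp only [Nat.succ_sub_succ]
        refine prod_congr rfl fun k _ => ?_
        ring_nf
      rw [hP, hR,
        show q ^ (n - j) * qB q n j * q ^ ((j+1) * ((j+1) + 1) / 2) *
            ((a + b) * ∏ k ∈ range j, (a + (b * q) * q ^ k)) *
            (∏ k ∈ Ico j n, (1 - (b * q) * q ^ (k + 1)))
          = (q ^ (n - j) * q ^ ((j+1) * ((j+1) + 1) / 2)) * ((a+b) * (qB q n j *
            (∏ k ∈ range j, (a + (b * q) * q ^ k)) *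
            (∏ k ∈ Ico j n, (1 - (b * q) * q ^ (k + 1))))) from by ring, hpow]
      ring
    rw [Finset.sum_range_succ']
    have split : ∀ j ∈ range (n+1),
        qB q (n+1) (j+1) * q ^ ((j+1) * ((j+1) + 1) / 2) *
          (∏ k ∈ range (j+1), (a + b * q ^ k)) * (∏ k ∈ Ico (j+1) (n+1), (1 - b * q ^ (k + 1)))
        = qB q n (j+1) * q ^ ((j+1) * ((j+1) + 1) / 2) *
            (∏ k ∈ range (j+1), (a + b * q ^ k)) * (∏ k ∈ Ico (j+1) (n+1), (1 - b * q ^ (k + 1)))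
          + q ^ (n - j) * qB q n j * q ^ ((j+1) * ((j+1) + 1) / 2) *
            (∏ k ∈ range (j+1), (a + b * q ^ k)) *
            (∏ k ∈ Ico (j+1) (n+1), (1 - b * q ^ (k + 1))) := by
      intro j _
      rw [qB_succ]; ring
    rw [Finset.sum_congr rfl split, Finset.sum_add_distrib]
    rw [Finset.sum_congr rfl key, ← Finset.mul_sum, ih (b * q)]
    have first : (∑ j ∈ range (n+1), qB q n (j+1) * q ^ ((j+1) * ((j+1) + 1) / 2) *
          (∏ k ∈ range (j+1), (a + b * q ^ k)) * (∏ k ∈ Ico (j+1) (n+1), (1 - b * q ^ (k + 1))))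
        + qB q (n+1) 0 * q ^ (0 * (0 + 1) / 2) *
          (∏ k ∈ range 0, (a + b * q ^ k)) * (∏ k ∈ Ico 0 (n+1), (1 - b * q ^ (k + 1)))
        = (1 - b * q ^ (n+1)) * ∏ k ∈ range n, (1 + a * q ^ (k + 1)) := by
      rw [show qB q (n+1) 0 = qB q n 0 from by rw [qB_zero, qB_zero]]
      have unpeel := Finset.sum_range_succ' (fun j => qB q n j * q ^ (j * (j + 1) / 2) *
        (∏ k ∈ range j, (a + b * q ^ k)) * (∏ k ∈ Ico j (n+1), (1 - b * q ^ (k + 1)))) (n+1)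
      beta_reduce at unpeel
      rw [← unpeel]
      rw [Finset.sum_range_succ, qB_eq_zero q n (n+1) (by omega)]
      have step : ∀ j ∈ range (n+1),
          qB q n j * q ^ (j * (j + 1) / 2) * (∏ k ∈ range j, (a + b * q ^ k)) *
            (∏ k ∈ Ico j (n+1), (1 - b * q ^ (k + 1)))
          = (1 - b * q ^ (n+1)) * (qB q n j * q ^ (j * (j + 1) / 2) *
            (∏ k ∈ range j, (a + b * q ^ k)) * (∏ k ∈ Ico j n, (1 - b * q ^ (k + 1)))) := by
        intro j hj
        rw [prod_Ico_succ_top (Nat.lt_succ_iff.mp (mem_range.mp hj))]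
        ring
      rw [Finset.sum_congr rfl step, ← Finset.mul_sum, ih b]
      ring
    rw [show (∑ j ∈ range (n+1), qB q n (j+1) * q ^ ((j+1) * ((j+1) + 1) / 2) *
          (∏ k ∈ range (j+1), (a + b * q ^ k)) * (∏ k ∈ Ico (j+1) (n+1), (1 - b * q ^ (k + 1))))
        + q ^ (n+1) * (a + b) * ∏ k ∈ range n, (1 + a * q ^ (k + 1))
        + qB q (n+1) 0 * q ^ (0 * (0 + 1) / 2) *
          (∏ k ∈ range 0, (a + b * q ^ k)) * (∏ k ∈ Ico 0 (n+1), (1 - b * q ^ (k + 1)))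
        = ((∑ j ∈ range (n+1), qB q n (j+1) * q ^ ((j+1) * ((j+1) + 1) / 2) *
          (∏ k ∈ range (j+1), (a + b * q ^ k)) * (∏ k ∈ Ico (j+1) (n+1), (1 - b * q ^ (k + 1))))
        + qB q (n+1) 0 * q ^ (0 * (0 + 1) / 2) *
          (∏ k ∈ range 0, (a + b * q ^ k)) * (∏ k ∈ Ico 0 (n+1), (1 - b * q ^ (k + 1))))
        + q ^ (n+1) * (a + b) * ∏ k ∈ range n, (1 + a * q ^ (k + 1)) from by ring, first]
    rw [Finset.prod_range_succ]
    ring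

lemma qB_mul (q : ℂ) : ∀ n, ∀ j, j ≤ n →
    qB q n j * (∏ k ∈ range j, (1 - q ^ (k+1))) * (∏ k ∈ range (n-j), (1 - q ^ (k+1)))
    = ∏ k ∈ range n, (1 - q ^ (k+1)) := by
  intro n
  induction n with
  | zero => intro j hj; interval_cases j; simp [qB]
  | succ n ih =>
    intro j hj
    match j with
    | 0 => simp [qB_zero]
    | j'+1 =>
      rcases Nat.lt_or_ge j' n with hlt | hge
      · have ih1 := ih (j'+1) hlt
        have ih2 := ih j' (Nat.le_of_lt hlt)
        have e : n - j' = (n - (j'+1)) + 1 := by omega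
        have hpow : q ^ ((n - (j'+1)) + 1) * q ^ (j'+1) = q ^ (n+1) := by
          rw [← pow_add]; congr 1; omega
        rw [prod_range_succ] at ih1
        rw [e, prod_range_succ] at ih2
        rw [qB_succ, show n + 1 - (j'+1) = n - j' from by omega, e]
        simp only [prod_range_succ]
        linear_combination (1 - q ^ ((n - (j'+1)) + 1)) * ih1
          + q ^ ((n - (j'+1)) + 1) * (1 - q ^ (j'+1)) * ih2
          - (∏ k ∈ range n, (1 - q ^ (k+1))) * hpow
      · have hj' : j' = n := by omega
        subst hj'
        simp [qB_diag]

lemma partial_eq (q a b : ℂ) (hQ : ∀ k : ℕ, (1:ℂ) - q ^ (k+1) ≠ 0)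
    (hR : ∀ k : ℕ, (1:ℂ) - b * q ^ (k+1) ≠ 0) (n : ℕ) :
    ∑ j ∈ range (n+1), ((∏ k ∈ range j, (a + b * q ^ k)) * q ^ (j * (j + 1) / 2) /
        ((∏ k ∈ range j, (1 - q ^ (k + 1))) * ∏ k ∈ range j, (1 - b * q ^ (k + 1))))
        / (∏ k ∈ range (n - j), (1 - q ^ (k+1)))
    = (∏ k ∈ range n, (1 + a * q ^ (k + 1))) /
        ((∏ k ∈ range n, (1 - q ^ (k+1))) * ∏ k ∈ range n, (1 - b * q ^ (k+1))) := by
  have hQn : ∀ m : ℕ, (∏ k ∈ range m, (1 - q ^ (k+1))) ≠ 0 :=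
    fun m => Finset.prod_ne_zero_iff.mpr fun k _ => hQ k
  have hRn : ∀ m : ℕ, (∏ k ∈ range m, (1 - b * q ^ (k+1))) ≠ 0 :=
    fun m => Finset.prod_ne_zero_iff.mpr fun k _ => hR k
  rw [eq_div_iff (mul_ne_zero (hQn n) (hRn n)), ← qB_star q a n b, Finset.sum_mul]
  refine Finset.sum_congr rfl fun j hj => ?_
  have hjn : j ≤ n := Nat.lt_succ_iff.mp (mem_range.mp hj)
  have hBQ := qB_mul q n j hjn
  have hRP : (∏ k ∈ range j, (1 - b * q ^ (k+1))) * (∏ k ∈ Ico j n, (1 - b * q ^ (k+1)))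
      = ∏ k ∈ range n, (1 - b * q ^ (k+1)) :=
    Finset.prod_range_mul_prod_Ico _ hjn
  rw [← hBQ, ← hRP, div_div, div_mul_eq_mul_div,
    div_eq_iff (mul_ne_zero (mul_ne_zero (hQn j) (hRn j)) (hQn (n-j)))]
  ring

lemma summable_log_one_add {g : ℕ → ℂ} (hs : Summable fun k => ‖g k‖) :
    Summable fun k => Complex.log (1 + g k) := by
  have h0 : Filter.Tendsto (fun k => ‖g k‖) Filter.atTop (nhds 0) := hs.tendsto_atTop_zero
  refine Summable.of_norm_bounded_eventually_nat (g := fun k => 3/2 * ‖g k‖) (hs.mul_left _) ?_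
  filter_upwards [h0.eventually_lt_const (by norm_num : (0:ℝ) < 1/2)] with k hk
  exact Complex.norm_log_one_add_half_le_self (le_of_lt hk)

lemma multipliable_one_add {g : ℕ → ℂ} (hs : Summable fun k => ‖g k‖) :
    Multipliable fun k => 1 + g k := by
  by_cases hne : ∀ k, 1 + g k ≠ 0
  · exact Complex.multipliable_of_summable_log (summable_log_one_add hs)
  · push_neg at hne
    obtain ⟨k0, hk0⟩ := hne
    refine ⟨0, ?_⟩
    have hev : ∀ᶠ s : Finset ℕ in Filter.atTop, (∏ i ∈ s, (1 + g i)) = 0 := by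
      filter_upwards [Filter.eventually_ge_atTop ({k0} : Finset ℕ)] with s hs'
      exact Finset.prod_eq_zero (hs' (Finset.mem_singleton_self k0)) hk0
    exact tendsto_const_nhds.congr' (hev.mono fun s h => h.symm)

lemma tprod_one_add_ne_zero {g : ℕ → ℂ} (hs : Summable fun k => ‖g k‖)
    (hne : ∀ k, 1 + g k ≠ 0) : (∏' k, (1 + g k)) ≠ 0 := by
  have := Complex.cexp_tsum_eq_tprod (f := fun k => 1 + g k) hne (summable_log_one_add hs)
  rw [← this]
  exact Complex.exp_ne_zero _

lemma geo_summable (q c : ℂ) (hq : ‖q‖ < 1) : Summable fun k : ℕ => ‖c * q ^ (k+1)‖ := by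
  have : Summable fun k : ℕ => (‖c‖ * ‖q‖) * ‖q‖ ^ k :=
    (summable_geometric_of_lt_one (norm_nonneg q) hq).mul_left _
  refine this.congr fun k => ?_
  rw [norm_mul, norm_pow, pow_succ]
  ring

open Filter Topology

/-- Cauchy/Ramanujan identity: for `|q| < 1` and `b q^n ≠ 1` for `n ≥ 1`,
`Σ_j (-b/a;q)_j a^j q^{j(j+1)/2} / ((q;q)_j (bq;q)_j) = (-aq;q)_∞ / (bq;q)_∞`,
with `a^j (-b/a;q)_j` interpreted as `∏_{k<j} (a + b q^k)`. -/
theorem stmt1 (q a b : ℂ) (hq : ‖q‖ < 1) (hb : ∀ n : ℕ, 1 ≤ n → b * q ^ n ≠ 1) :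
    (∑' j : ℕ, (∏ k ∈ range j, (a + b * q ^ k)) * q ^ (j * (j + 1) / 2) /
        ((∏ k ∈ range j, (1 - q ^ (k + 1))) * ∏ k ∈ range j, (1 - b * q ^ (k + 1))))
    = (∏' k : ℕ, (1 + a * q ^ (k + 1))) / ∏' k : ℕ, (1 - b * q ^ (k + 1)) := by
  have hqk : ∀ k : ℕ, ‖q ^ (k+1)‖ < 1 := fun k => by
    rw [norm_pow]; exact pow_lt_one₀ (norm_nonneg q) hq (Nat.succ_ne_zero k)
  have hQ : ∀ k : ℕ, (1:ℂ) - q ^ (k+1) ≠ 0 := by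
    intro k h
    rw [sub_eq_zero] at h
    have := hqk k
    rw [← h] at this
    simp at this
  have hR : ∀ k : ℕ, (1:ℂ) - b * q ^ (k+1) ≠ 0 := by
    intro k h
    rw [sub_eq_zero] at h
    exact hb (k+1) (by omega) h.symm
  have hAg : Summable fun k : ℕ => ‖a * q ^ (k+1)‖ := geo_summable q a hq
  have hQg : Summable fun k : ℕ => ‖-(q ^ (k+1))‖ := by simpa using geo_summable q (-1) hq
  have hRg : Summable fun k : ℕ => ‖-(b * q ^ (k+1))‖ := by simpa using geo_summable q b hq
  have hA_mult : Multipliable fun k : ℕ => 1 + a * q ^ (k+1) := multipliable_one_add hAg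
  have hQ_mult : Multipliable fun k : ℕ => 1 - q ^ (k+1) := by
    simpa [sub_eq_add_neg] using multipliable_one_add hQg
  have hR_mult : Multipliable fun k : ℕ => 1 - b * q ^ (k+1) := by
    simpa [sub_eq_add_neg] using multipliable_one_add hRg
  have hQne' : (∏' k : ℕ, (1 - q ^ (k+1))) ≠ 0 := by
    have := tprod_one_add_ne_zero hQg (fun k => by simpa [sub_eq_add_neg] using hQ k)
    simpa [sub_eq_add_neg] using this
  have hRne' : (∏' k : ℕ, (1 - b * q ^ (k+1))) ≠ 0 := by
    have := tprod_one_add_ne_zero hRg (fun k => by simpa [sub_eq_add_neg] using hR k)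
    simpa [sub_eq_add_neg] using this
  have hAlim : Tendsto (fun n => ∏ k ∈ range n, (1 + a * q ^ (k+1))) atTop
      (𝓝 (∏' k : ℕ, (1 + a * q ^ (k+1)))) := hA_mult.hasProd.tendsto_prod_nat
  have hQlim : Tendsto (fun n => ∏ k ∈ range n, (1 - q ^ (k+1))) atTop
      (𝓝 (∏' k : ℕ, (1 - q ^ (k+1)))) := hQ_mult.hasProd.tendsto_prod_nat
  have hRlim : Tendsto (fun n => ∏ k ∈ range n, (1 - b * q ^ (k+1))) atTop
      (𝓝 (∏' k : ℕ, (1 - b * q ^ (k+1)))) := hR_mult.hasProd.tendsto_prod_nat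
  set u : ℕ → ℂ := fun j => (∏ k ∈ range j, (a + b * q ^ k)) * q ^ (j * (j + 1) / 2) /
      ((∏ k ∈ range j, (1 - q ^ (k + 1))) * ∏ k ∈ range j, (1 - b * q ^ (k + 1))) with hu_def
  set w : ℕ → ℂ := fun j => (a + b * q ^ j) * q ^ (j+1) /
      ((1 - q ^ (j+1)) * (1 - b * q ^ (j+1))) with hw_def
  have hrec : ∀ j, u (j+1) = u j * w j := by
    intro j
    have h1 : (∏ k ∈ range j, (1 - q ^ (k+1))) ≠ 0 := prod_ne_zero_iff.mpr fun k _ => hQ k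
    have h2 : (∏ k ∈ range j, (1 - b * q ^ (k+1))) ≠ 0 := prod_ne_zero_iff.mpr fun k _ => hR k
    simp only [hu_def, hw_def]
    rw [prod_range_succ, prod_range_succ, prod_range_succ,
      show (j+1) * ((j+1) + 1) / 2 = j * (j+1) / 2 + (j+1) from by
        have e1 : (j+1) * ((j+1) + 1) = j * (j + 1) + 2 * (j + 1) := by ring
        omega,
      pow_add]
    field_simp
  have hw0 : Tendsto w atTop (𝓝 0) := by
    have hq0 : Tendsto (fun j : ℕ => q ^ j) atTop (𝓝 0) :=
      tendsto_pow_atTop_nhds_zero_of_norm_lt_one hq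
    have hq1 : Tendsto (fun j : ℕ => q ^ (j+1)) atTop (𝓝 0) := by
      simpa [Function.comp_def] using hq0.comp (tendsto_add_atTop_nat 1)
    have hnum : Tendsto (fun j : ℕ => (a + b * q ^ j) * q ^ (j+1)) atTop
        (𝓝 ((a + b * 0) * 0)) := (tendsto_const_nhds.add (hq0.const_mul b)).mul hq1
    have hden : Tendsto (fun j : ℕ => (1 - q ^ (j+1)) * (1 - b * q ^ (j+1))) atTop
        (𝓝 ((1 - 0) * (1 - b * 0))) :=
      (tendsto_const_nhds.sub hq1).mul (tendsto_const_nhds.sub (hq1.const_mul b))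
    have := hnum.div hden (by norm_num)
    simpa [hw_def, Pi.div_def] using this
  have hratio : ∀ᶠ j in atTop, ‖u (j+1)‖ ≤ (1/2) * ‖u j‖ := by
    have hwn : Tendsto (fun j => ‖w j‖) atTop (𝓝 0) := by simpa using hw0.norm
    filter_upwards [hwn.eventually_lt_const (by norm_num : (0:ℝ) < 1/2)] with j hj
    rw [hrec j, norm_mul, mul_comm]
    exact mul_le_mul_of_nonneg_right (le_of_lt hj) (norm_nonneg _)
  have hu_sum : Summable u := summable_of_ratio_norm_eventually_le (by norm_num) hratio
  have hQinv : Tendsto (fun m => ‖∏ k ∈ range m, (1 - q ^ (k+1))‖⁻¹) atTop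
      (𝓝 ‖∏' k : ℕ, (1 - q ^ (k+1))‖⁻¹) := (hQlim.norm).inv₀ (norm_ne_zero_iff.mpr hQne')
  obtain ⟨C, hC⟩ := hQinv.bddAbove_range
  have hCm : ∀ m, ‖∏ k ∈ range m, (1 - q ^ (k+1))‖⁻¹ ≤ C := fun m => hC (Set.mem_range_self m)
  set F : ℕ → ℕ → ℂ := fun n j =>
    if j ≤ n then u j / (∏ k ∈ range (n-j), (1 - q ^ (k+1))) else 0 with hF_def
  have hFa : ∀ n, (∑' j, F n j) = (∏ k ∈ range n, (1 + a * q ^ (k+1))) /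
      ((∏ k ∈ range n, (1 - q ^ (k+1))) * ∏ k ∈ range n, (1 - b * q ^ (k+1))) := by
    intro n
    rw [tsum_eq_sum (s := range (n+1)) (f := F n) ?_]
    · rw [← partial_eq q a b hQ hR n]
      refine Finset.sum_congr rfl fun j hj => ?_
      have hjn : j ≤ n := Nat.lt_succ_iff.mp (mem_range.mp hj)
      simp only [hF_def, if_pos hjn, hu_def]
    · intro j hj
      have : ¬ j ≤ n := by
        simp only [mem_range] at hj
        omega
      simp [hF_def, this]
  have hpoint : ∀ j, Tendsto (fun n => F n j) atTop
      (𝓝 (u j / ∏' k : ℕ, (1 - q ^ (k+1)))) := by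
    intro j
    have h1 : Tendsto (fun n : ℕ => ∏ k ∈ range (n - j), (1 - q ^ (k+1))) atTop
        (𝓝 (∏' k : ℕ, (1 - q ^ (k+1)))) := hQlim.comp (tendsto_sub_atTop_nat j)
    have h2 := (tendsto_const_nhds (x := u j)).div h1 hQne'
    refine h2.congr' ?_
    filter_upwards [eventually_ge_atTop j] with n hn
    simp [hF_def, hn]
  have hbound : ∀ᶠ n in atTop, ∀ j, ‖F n j‖ ≤ ‖u j‖ * C := by
    refine Filter.Eventually.of_forall fun n j => ?_
    by_cases hj : j ≤ n
    · simp only [hF_def, if_pos hj]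
      rw [norm_div, div_eq_mul_inv]
      exact mul_le_mul_of_nonneg_left (hCm (n-j)) (norm_nonneg _)
    · have hC0 : (0:ℝ) ≤ C := le_trans (by positivity) (hCm 0)
      simp only [hF_def, if_neg hj, norm_zero]
      positivity
  have htan := tendsto_tsum_of_dominated_convergence (hu_sum.norm.mul_right C) hpoint hbound
  have hseq : Tendsto (fun n => (∏ k ∈ range n, (1 + a * q ^ (k+1))) /
      ((∏ k ∈ range n, (1 - q ^ (k+1))) * ∏ k ∈ range n, (1 - b * q ^ (k+1)))) atTop
      (𝓝 ((∏' k : ℕ, (1 + a * q ^ (k+1))) /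
        ((∏' k : ℕ, (1 - q ^ (k+1))) * ∏' k : ℕ, (1 - b * q ^ (k+1))))) :=
    hAlim.div (hQlim.mul hRlim) (mul_ne_zero hQne' hRne')
  have key : (∑' j, u j / ∏' k : ℕ, (1 - q ^ (k+1)))
      = (∏' k : ℕ, (1 + a * q ^ (k+1))) /
        ((∏' k : ℕ, (1 - q ^ (k+1))) * ∏' k : ℕ, (1 - b * q ^ (k+1))) :=
    tendsto_nhds_unique (htan.congr fun n => hFa n) hseq
  rw [tsum_div_const] at key
  rw [div_eq_div_iff hQne' (mul_ne_zero hQne' hRne')] at key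
  show (∑' j, u j) = _
  rw [eq_div_iff hRne']
  apply mul_right_cancel₀ hQne'
  linear_combination key
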